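/- For all m ≥ 1 and t ≥ 0, Σ_{k=0}^{t} h_k(1+y_1, ..., 1+y_m) = Σ_{k=0}^{t} C(m+t, m+k) h_k(y_1, ..., y_m) as polynomials in Z[y_1,...,y_m]. -/

import Mathlib

open Finset

lemma lemW (b : ℕ) : ∀ n a : ℕ,
    ∑ ij ∈ antidiagonal n, ij.1.choose a * ij.2.choose b = (n + 1).choose (a + b + 1) := by
  intro n
  induction n with
  | zero =>
    intro a
    simp only [Finset.Nat.antidiagonal_zero, Finset.sum_singleton]
    rw [Nat.choose_succ_succ 0 (a + b)]
    rcases a with _ | a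
    · rcases b with _ | b <;> simp [Nat.choose_zero_succ]
    · rw [Nat.choose_eq_zero_of_lt (Nat.succ_pos a), zero_mul,
          Nat.choose_eq_zero_of_lt (by omega), Nat.choose_eq_zero_of_lt (by omega), add_zero]
  | succ n ih =>
    intro a
    rw [Finset.Nat.sum_antidiagonal_succ]
    rcases a with _ | a
    · have h := ih 0
      simp only [Nat.choose_zero_right, one_mul, Nat.zero_add] at h ⊢
      rw [h, Nat.choose_succ_succ (n + 1) b]
    · have split : ∀ p : ℕ × ℕ, (p.1 + 1).choose (a + 1) * p.2.choose b
          = p.1.choose a * p.2.choose b + p.1.choose (a + 1) * p.2.choose b := by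
        intro p
        rw [Nat.choose_succ_succ, add_mul]
      simp only [split, Finset.sum_add_distrib, ih a, ih (a + 1)]
      rw [Nat.choose_eq_zero_of_lt (Nat.succ_pos a), zero_mul, zero_add]
      rw [show a + 1 + b + 1 = (a + b + 1) + 1 by ring]
      rw [Nat.choose_succ_succ (n + 1) (a + b + 1)]

lemma lemV (b c B : ℕ) (hB : c ≤ B) (t : ℕ) :
    ∑ j ∈ range (t + 1), j.choose b * (t - j + c).choose B
      = (t + c + 1).choose (b + B + 1) := by
  have h := lemW B (t + c) b
  rw [Finset.Nat.sum_antidiagonal_eq_sum_range_succ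
    (fun x y => x.choose b * y.choose B)] at h
  rw [← h]
  have e1 : ∀ j ∈ range (t + 1),
      j.choose b * (t - j + c).choose B = j.choose b * (t + c - j).choose B := by
    intro j hj
    simp only [Finset.mem_range] at hj
    congr 2
    omega
  rw [Finset.sum_congr rfl e1]
  apply Finset.sum_subset
  · apply Finset.range_subset_range.2; omega
  · intro x hx hnx
    simp only [Finset.mem_range] at hx hnx
    rw [Nat.choose_eq_zero_of_lt (show t + c - x < B by omega), mul_zero]

lemma lemT {M : Type*} [AddCommMonoid M] (G : ℕ → ℕ → M) : ∀ t : ℕ,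
    ∑ k ∈ range (t + 1), ∑ p ∈ antidiagonal k, G p.1 p.2
      = ∑ j ∈ range (t + 1), ∑ q ∈ range (t - j + 1), G j q := by
  intro t
  induction t with
  | zero => simp
  | succ t ih =>
    rw [Finset.sum_range_succ, ih,
      Finset.sum_range_succ (fun j => ∑ q ∈ range (t + 1 - j + 1), G j q)]
    have hlast : ∑ q ∈ range (t + 1 - (t + 1) + 1), G (t + 1) q = G (t + 1) 0 := by
      simp
    have hsplit : ∀ j ∈ range (t + 1), ∑ q ∈ range (t + 1 - j + 1), G j q
        = (∑ q ∈ range (t - j + 1), G j q) + G j (t + 1 - j) := by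
      intro j hj
      simp only [Finset.mem_range] at hj
      rw [show t + 1 - j + 1 = (t - j + 1) + 1 by omega, Finset.sum_range_succ]
      congr 2
      omega
    rw [Finset.sum_congr rfl hsplit, Finset.sum_add_distrib, hlast,
      Finset.Nat.sum_antidiagonal_eq_sum_range_succ G (t + 1),
      Finset.sum_range_succ (fun k => G k (t + 1 - k))]
    simp [add_assoc]

lemma lemK {ι : Type*} [DecidableEq ι] (e : ι → ℕ) (s : Finset ι) : ∀ t : ℕ,
    ∑ k ∈ range (t + 1), ∑ d ∈ piAntidiag s k, ∏ i ∈ s, (d i).choose (e i)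
      = (t + s.card).choose ((∑ i ∈ s, e i) + s.card) := by
  induction s using Finset.cons_induction with
  | empty =>
    intro t
    rw [Finset.sum_eq_single 0]
    · simp
    · intro k _ hk0
      rw [Finset.piAntidiag_empty_of_ne_zero hk0]
      simp
    · simp
  | cons a s ha ih =>
    intro t
    have step : ∀ k ∈ range (t + 1),
        ∑ d ∈ piAntidiag (Finset.cons a s ha) k, ∏ i ∈ Finset.cons a s ha, (d i).choose (e i)
        = ∑ p ∈ antidiagonal k, p.1.choose (e a) *
            ∑ f ∈ piAntidiag s p.2, ∏ i ∈ s, (f i).choose (e i) := by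
      intro k _
      rw [Finset.piAntidiag_cons ha, Finset.sum_disjiUnion]
      refine Finset.sum_congr rfl fun p _ => ?_
      rw [Finset.sum_map, Finset.mul_sum]
      refine Finset.sum_congr rfl fun f hf => ?_
      have hfa : f a = 0 := by
        simp only [Finset.mem_piAntidiag] at hf
        by_contra h
        exact ha (hf.2 a h)
      rw [Finset.prod_cons]
      congr 1
      · simp [addRightEmbedding_apply, hfa]
      · refine Finset.prod_congr rfl fun i hi => ?_
        have hia : i ≠ a := fun h => ha (h ▸ hi)
        simp [addRightEmbedding_apply, hia]
    rw [Finset.sum_congr rfl step,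
      lemT (fun x y => x.choose (e a) * ∑ f ∈ piAntidiag s y, ∏ i ∈ s, (f i).choose (e i)) t]
    have inner : ∀ j ∈ range (t + 1),
        ∑ q ∈ range (t - j + 1), j.choose (e a) *
            ∑ f ∈ piAntidiag s q, ∏ i ∈ s, (f i).choose (e i)
        = j.choose (e a) * ((t - j + s.card).choose ((∑ i ∈ s, e i) + s.card)) := by
      intro j _
      rw [← Finset.mul_sum, ih (t - j)]
    rw [Finset.sum_congr rfl inner,
      lemV (e a) s.card ((∑ i ∈ s, e i) + s.card) (Nat.le_add_left _ _) t,
      Finset.card_cons, Finset.sum_cons]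
    congr 1 <;> omega

open MvPolynomial

noncomputable def hpoly (m k : ℕ) : MvPolynomial (Fin m) ℤ :=
  ∑ d ∈ Finset.finsuppAntidiag (Finset.univ : Finset (Fin m)) k, monomial d (1 : ℤ)

lemma prod_univ_X_pow (m : ℕ) (g : Fin m → ℕ) :
    (∏ i, (X i : MvPolynomial (Fin m) ℤ) ^ g i)
      = monomial (Finsupp.equivFunOnFinite.symm g) 1 := by
  rw [← MvPolynomial.prod_X_pow_eq_monomial]
  refine (Finset.prod_subset (Finset.subset_univ _) fun i _ hi => ?_).symm
  have : Finsupp.equivFunOnFinite.symm g i = 0 := by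
    simpa using Finsupp.notMem_support_iff.1 hi
  simp only [Finsupp.coe_equivFunOnFinite_symm] at this ⊢
  simp [this]

lemma coeff_prod_one_add_X_pow (m : ℕ) (d : Fin m → ℕ) (e : Fin m →₀ ℕ) :
    MvPolynomial.coeff e (∏ i, (1 + MvPolynomial.X i : MvPolynomial (Fin m) ℤ) ^ d i)
      = ∏ i, (((d i).choose (e i) : ℤ)) := by
  have hfac : ∀ i : Fin m, (1 + X i : MvPolynomial (Fin m) ℤ) ^ d i
      = ∑ j ∈ Finset.range (d i + 1), C (((d i).choose j : ℤ)) * X i ^ j := by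
    intro i
    rw [add_comm, add_pow]
    refine Finset.sum_congr rfl fun j _ => ?_
    rw [one_pow, mul_one, mul_comm]
    congr 1
  simp only [hfac]
  rw [Finset.prod_univ_sum]
  rw [MvPolynomial.coeff_sum]
  have hterm : ∀ g : Fin m → ℕ,
      MvPolynomial.coeff e (∏ i, C (((d i).choose (g i) : ℤ)) * X i ^ g i)
        = if g = ⇑e then ∏ i, (((d i).choose (g i) : ℤ)) else 0 := by
    intro g
    rw [Finset.prod_mul_distrib, ← map_prod, prod_univ_X_pow,
      MvPolynomial.coeff_C_mul, MvPolynomial.coeff_monomial]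
    have hcond : (Finsupp.equivFunOnFinite.symm g = e) ↔ (g = ⇑e) := by
      rw [Equiv.symm_apply_eq]
      exact Iff.rfl
    by_cases h : g = ⇑e
    · simp [hcond, h]
    · simp [hcond, h]
  rw [Finset.sum_congr rfl fun g _ => hterm g, Finset.sum_ite_eq']
  split_ifs with h
  · rfl
  · symm
    simp only [Fintype.mem_piFinset, Finset.mem_range, not_forall] at h
    obtain ⟨i, hi⟩ := h
    apply Finset.prod_eq_zero (Finset.mem_univ i)
    rw [Nat.choose_eq_zero_of_lt (by omega)]
    norm_num

theorem stmt18 {m : ℕ} (hm : 1 ≤ m) (t : ℕ) :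
    ∑ k ∈ Finset.range (t + 1),
        MvPolynomial.aeval (fun i => 1 + MvPolynomial.X i) (hpoly m k) =
      ∑ k ∈ Finset.range (t + 1),
        MvPolynomial.C (((m + t).choose (m + k) : ℤ)) * hpoly m k := by
  apply MvPolynomial.ext
  intro e
  have haev : ∀ k, aeval (fun i => 1 + X i) (hpoly m k)
      = ∑ d ∈ Finset.finsuppAntidiag (Finset.univ : Finset (Fin m)) k,
          ∏ i, (1 + X i : MvPolynomial (Fin m) ℤ) ^ d i := by
    intro k
    unfold hpoly
    rw [map_sum]
    refine Finset.sum_congr rfl fun d _ => ?_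
    rw [aeval_monomial, map_one, one_mul, Finsupp.prod]
    refine Finset.prod_subset (Finset.subset_univ _) fun i _ hi => ?_
    rw [Finsupp.notMem_support_iff.1 hi, pow_zero]
  have hL : MvPolynomial.coeff e (∑ k ∈ Finset.range (t + 1),
      MvPolynomial.aeval (fun i => 1 + MvPolynomial.X i) (hpoly m k))
      = ((t + m).choose ((∑ i, e i) + m) : ℤ) := by
    rw [MvPolynomial.coeff_sum]
    simp only [haev, MvPolynomial.coeff_sum, coeff_prod_one_add_X_pow]
    have htrans : ∀ k, (∑ d ∈ (Finset.finsuppAntidiag (Finset.univ : Finset (Fin m)) k : Finset (Fin m →₀ ℕ)),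
        ∏ i, (((d i).choose (e i)) : ℤ))
        = ∑ g ∈ (Finset.piAntidiag (Finset.univ : Finset (Fin m)) k : Finset (Fin m → ℕ)),
            ∏ i, (((g i).choose (e i)) : ℤ) := by
      intro k
      refine Finset.sum_nbij' (fun d => ⇑d) (fun g => Finsupp.equivFunOnFinite.symm g)
        ?_ ?_ ?_ ?_ ?_
      · intro d hd
        simp only [Finset.mem_finsuppAntidiag] at hd
        simp [Finset.mem_piAntidiag, hd.1]
      · intro g hg
        simp only [Finset.mem_piAntidiag] at hg
        simp [Finset.mem_finsuppAntidiag, Finsupp.coe_equivFunOnFinite_symm, hg.1,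
          Finsupp.support_subset_iff]
      · intro d _
        exact Finsupp.equivFunOnFinite_symm_coe d
      · intro g _
        ext i
        simp [Finsupp.coe_equivFunOnFinite_symm]
      · intro d _
        rfl
    rw [Finset.sum_congr rfl fun k _ => htrans k]
    have hK := lemK (⇑e) (Finset.univ : Finset (Fin m)) t
    rw [Finset.card_univ, Fintype.card_fin] at hK
    rw [show (∑ k ∈ Finset.range (t + 1), ∑ g ∈ Finset.piAntidiag
          (Finset.univ : Finset (Fin m)) k, ∏ i, (((g i).choose (e i)) : ℤ))
        = ((∑ k ∈ Finset.range (t + 1), ∑ g ∈ Finset.piAntidiag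
          (Finset.univ : Finset (Fin m)) k, ∏ i, ((g i).choose (e i)) : ℕ) : ℤ) by
      push_cast; rfl]
    rw [hK]
  have hch : ∀ k, MvPolynomial.coeff e (hpoly m k) = if (∑ i, e i) = k then 1 else 0 := by
    intro k
    unfold hpoly
    rw [MvPolynomial.coeff_sum]
    simp only [MvPolynomial.coeff_monomial]
    rw [Finset.sum_ite_eq']
    simp [Finset.mem_finsuppAntidiag]
  have hR : MvPolynomial.coeff e (∑ k ∈ Finset.range (t + 1),
      MvPolynomial.C (((m + t).choose (m + k) : ℤ)) * hpoly m k)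
      = ((t + m).choose ((∑ i, e i) + m) : ℤ) := by
    rw [MvPolynomial.coeff_sum]
    simp only [MvPolynomial.coeff_C_mul, hch, mul_ite, mul_one, mul_zero]
    rw [Finset.sum_ite_eq]
    split_ifs with h
    · simp only [Finset.mem_range] at h
      norm_cast
      rw [Nat.add_comm m t, Nat.add_comm m (∑ i, e i)]
    · simp only [Finset.mem_range] at h
      rw [Nat.choose_eq_zero_of_lt (by omega)]
      simp
  rw [hL, hR]
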